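/- Suppose A, B, A', B' are discrete random variables with I(A'; B | A) = 0 (a causality/anticipation-free condition). Then the channel excess entropy decomposes as I((A,B); B' | A') = I((A,B);(A',B')) - I(A;A'). -/
import Mathlib


open Real BigOperators

/-- Probability that the random variable `X` takes the value `x`,
under the weight function `μ` on a finite sample space `Ω`. -/
noncomputable def pr {Ω α : Type*} [Fintype Ω] [DecidableEq α]
    (μ : Ω → ℝ) (X : Ω → α) (x : α) : ℝ :=
  ∑ ω, if X ω = x then μ ω else 0

/-- Shannon entropy of the random variable `X`. -/
noncomputable def ent {Ω α : Type*} [Fintype Ω] [Fintype α] [DecidableEq α]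
    (μ : Ω → ℝ) (X : Ω → α) : ℝ :=
  ∑ x, Real.negMulLog (pr μ X x)

/-- Mutual information `I(X;Y) = H(X) + H(Y) - H(X,Y)`. -/
noncomputable def mi {Ω α β : Type*} [Fintype Ω]
    [Fintype α] [Fintype β] [DecidableEq α] [DecidableEq β]
    (μ : Ω → ℝ) (X : Ω → α) (Y : Ω → β) : ℝ :=
  ent μ X + ent μ Y - ent μ (fun ω => (X ω, Y ω))

/-- Conditional mutual information `I(X;Z|W) = H(X,W) + H(Z,W) - H(X,Z,W) - H(W)`. -/
noncomputable def condMI {Ω α β γ : Type*} [Fintype Ω]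
    [Fintype α] [Fintype β] [Fintype γ]
    [DecidableEq α] [DecidableEq β] [DecidableEq γ]
    (μ : Ω → ℝ) (X : Ω → α) (Z : Ω → β) (W : Ω → γ) : ℝ :=
  ent μ (fun ω => (X ω, W ω)) + ent μ (fun ω => (Z ω, W ω))
    - ent μ (fun ω => (X ω, Z ω, W ω)) - ent μ W


lemma pr_comp {Ω α β : Type*} [Fintype Ω] [DecidableEq α] [DecidableEq β]
    (μ : Ω → ℝ) (X : Ω → α) (e : α → β) (he : Function.Injective e) (x : α) :
    pr μ (fun ω => e (X ω)) (e x) = pr μ X x := by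
  unfold pr
  refine Finset.sum_congr rfl fun ω _ => ?_
  simp [he.eq_iff]

lemma ent_comp {Ω α β : Type*} [Fintype Ω] [Fintype α] [Fintype β]
    [DecidableEq α] [DecidableEq β]
    (μ : Ω → ℝ) (X : Ω → α) (e : α → β) (he : Function.Injective e) :
    ent μ (fun ω => e (X ω)) = ent μ X := by
  unfold ent
  have h0 : ∀ y ∈ Finset.univ, y ∉ Finset.image e Finset.univ →
      Real.negMulLog (pr μ (fun ω => e (X ω)) y) = 0 := by
    intro y _ hy
    have : pr μ (fun ω => e (X ω)) y = 0 := by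
      unfold pr
      refine Finset.sum_eq_zero fun ω _ => ?_
      rw [if_neg]
      intro h
      exact hy (Finset.mem_image.mpr ⟨X ω, Finset.mem_univ _, h⟩)
    simp [this]
  rw [← Finset.sum_subset (Finset.subset_univ _) h0,
    Finset.sum_image (fun a _ b _ h => he h)]
  exact Finset.sum_congr rfl fun x _ => by rw [pr_comp μ X e he]

/-- For a causal (anticipation-free) channel, i.e. when `I(A';B|A) = 0`,
the channel excess entropy decomposes as
`I((A,B); B' | A') = I((A,B);(A',B')) - I(A;A')`. -/
theorem channel_excess_entropy_decomposition
    {Ω α β α' β' : Type*} [Fintype Ω]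
    [Fintype α] [Fintype β] [Fintype α'] [Fintype β']
    [DecidableEq α] [DecidableEq β] [DecidableEq α'] [DecidableEq β']
    (μ : Ω → ℝ) (hμ : ∀ ω, 0 ≤ μ ω) (hsum : ∑ ω, μ ω = 1)
    (A : Ω → α) (B : Ω → β) (A' : Ω → α') (B' : Ω → β')
    (hCausal : condMI μ A' B A = 0) :
    condMI μ (fun ω => (A ω, B ω)) B' A'
      = mi μ (fun ω => (A ω, B ω)) (fun ω => (A' ω, B' ω)) - mi μ A A' := by
  have e1 : ent μ (fun ω => ((A ω, B ω), A' ω)) = ent μ (fun ω => (A' ω, B ω, A ω)) := by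
    have := ent_comp μ (fun ω => ((A ω, B ω), A' ω))
      (fun p => (p.2, p.1.2, p.1.1)) (fun p q h => by
        obtain ⟨⟨a,b⟩,c⟩ := p; obtain ⟨⟨d,e⟩,f⟩ := q; simp_all)
    simpa using this.symm
  have e2 : ent μ (fun ω => (B' ω, A' ω)) = ent μ (fun ω => (A' ω, B' ω)) := by
    have := ent_comp μ (fun ω => (B' ω, A' ω))
      (fun p => (p.2, p.1)) (fun p q h => by
        obtain ⟨a,b⟩ := p; obtain ⟨c,d⟩ := q; simp_all)
    simpa using this.symm
  have e3 : ent μ (fun ω => ((A ω, B ω), B' ω, A' ω))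
      = ent μ (fun ω => ((A ω, B ω), A' ω, B' ω)) := by
    have := ent_comp μ (fun ω => ((A ω, B ω), B' ω, A' ω))
      (fun p => (p.1, p.2.2, p.2.1)) (fun p q h => by
        obtain ⟨a,b,c⟩ := p; obtain ⟨d,e,f⟩ := q; simp_all)
    simpa using this.symm
  have e4 : ent μ (fun ω => (A ω, B ω)) = ent μ (fun ω => (B ω, A ω)) := by
    have := ent_comp μ (fun ω => (A ω, B ω))
      (fun p => (p.2, p.1)) (fun p q h => by
        obtain ⟨a,b⟩ := p; obtain ⟨c,d⟩ := q; simp_all)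
    simpa using this.symm
  have e5 : ent μ (fun ω => (A ω, A' ω)) = ent μ (fun ω => (A' ω, A ω)) := by
    have := ent_comp μ (fun ω => (A ω, A' ω))
      (fun p => (p.2, p.1)) (fun p q h => by
        obtain ⟨a,b⟩ := p; obtain ⟨c,d⟩ := q; simp_all)
    simpa using this.symm
  unfold condMI mi at *
  linarith
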